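/- Let C be the conic x² + y²/(1-p²) = 1 with foci P = (p,0) and P' = (-p,0) (0 < p < 1), and for X on the unit circle let L be the line through X perpendicular to PX. If Y is the second intersection of L with the unit circle, then L is also perpendicular to P'Y; hence the negative pedal envelopes of C from P and from P' coincide. -/

import Mathlib

open Real EuclideanGeometry

set_option maxHeartbeats 1000000 in
/-- Let `P = (p,0)`, `P' = (-p,0)` (`0 < p < 1`) be the foci of `x² + y²/(1-p²) = 1`,
whose pedal circle is the unit circle. For `X` on the unit circle let `L` be the line
through `X` perpendicular to `PX`, and let `Y` be the second intersection of `L` with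
the unit circle (with `Y = X` in the tangent case). Then `L` is also perpendicular to
`P'Y`; hence the negative pedal envelopes from `P` and `P'` coincide. -/
theorem negative_pedal_other_focus (p : ℝ) (hp0 : 0 < p) (hp1 : p < 1)
    (P P' X Y : EuclideanSpace ℝ (Fin 2))
    (hP0 : P 0 = p) (hP1 : P 1 = 0) (hP'0 : P' 0 = -p) (hP'1 : P' 1 = 0)
    (hX : ‖X‖ = 1) (hY : ‖Y‖ = 1)
    (hYL : inner ℝ (Y - X) (X - P) = (0 : ℝ))
    (htangent : Y = X → X 1 = 0) :
    ∀ Z : EuclideanSpace ℝ (Fin 2),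
      inner ℝ (Z - X) (X - P) = (0 : ℝ) → inner ℝ (Z - X) (Y - P') = (0 : ℝ) := by
  intro Z hZ
  have hx : (X 0)^2 + (X 1)^2 = 1 := by
    have h := hX
    rw [EuclideanSpace.norm_eq, Fin.sum_univ_two, Real.sqrt_eq_one] at h
    simpa [Real.norm_eq_abs, sq_abs] using h
  have hy : (Y 0)^2 + (Y 1)^2 = 1 := by
    have h := hY
    rw [EuclideanSpace.norm_eq, Fin.sum_univ_two, Real.sqrt_eq_one] at h
    simpa [Real.norm_eq_abs, sq_abs] using h
  have h1 : (Y 0 - X 0) * (X 0 - p) + (Y 1 - X 1) * (X 1) = 0 := by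
    have := hYL
    simp only [PiLp.inner_apply, Fin.sum_univ_two, PiLp.sub_apply,
      RCLike.inner_apply, conj_trivial, hP0, hP1] at this
    linarith [this]
  have hz : (Z 0 - X 0) * (X 0 - p) + (Z 1 - X 1) * (X 1) = 0 := by
    have := hZ
    simp only [PiLp.inner_apply, Fin.sum_univ_two, PiLp.sub_apply,
      RCLike.inner_apply, conj_trivial, hP0, hP1] at this
    linarith [this]
  have goal : (Z 0 - X 0) * (Y 0 + p) + (Z 1 - X 1) * (Y 1) = 0 := by
    by_cases hx1 : X 1 = 0
    · -- tangent-to-axis case: X = (±1, 0), forces Y = X, Z 0 = X 0, Y 1 = 0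
      have hx0 : X 0 ^ 2 = 1 := by nlinarith [hx]
      have hxp : X 0 - p ≠ 0 := by
        intro h
        have : X 0 = p := by linarith
        nlinarith
      have hy0 : Y 0 = X 0 := by
        have := h1
        rw [hx1] at this
        have h2 : (Y 0 - X 0) * (X 0 - p) = 0 := by linarith
        rcases mul_eq_zero.1 h2 with h | h
        · linarith
        · exact absurd h hxp
      have hy1 : Y 1 = 0 := by nlinarith [hy, hx, hy0, hx1]
      have hz0 : Z 0 = X 0 := by
        have := hz
        rw [hx1] at this
        have h2 : (Z 0 - X 0) * (X 0 - p) = 0 := by linarith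
        rcases mul_eq_zero.1 h2 with h | h
        · linarith
        · exact absurd h hxp
      rw [hz0, hy1]
      ring
    · -- generic case
      have hYX : Y ≠ X := fun h => hx1 (htangent h)
      have hne : (Y 0 - X 0)^2 + (Y 1 - X 1)^2 ≠ 0 := by
        intro h
        apply hYX
        have hs0 : (Y 0 - X 0)^2 = 0 := by
          nlinarith [sq_nonneg (Y 0 - X 0), sq_nonneg (Y 1 - X 1)]
        have hs1 : (Y 1 - X 1)^2 = 0 := by
          nlinarith [sq_nonneg (Y 0 - X 0), sq_nonneg (Y 1 - X 1)]
        have h0 : Y 0 = X 0 := by have := sq_eq_zero_iff.1 hs0; linarith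
        have h1' : Y 1 = X 1 := by have := sq_eq_zero_iff.1 hs1; linarith
        ext i
        fin_cases i <;> assumption
      -- key parallelism: (X - P) ∥ (Y - P')
      have hcross : (X 0 - p) * (Y 1) - (X 1) * (Y 0 + p) = 0 := by
        have key : ((X 0 - p) * (Y 1) - (X 1) * (Y 0 + p)) *
            ((Y 0 - X 0)^2 + (Y 1 - X 1)^2) = 0 := by
          linear_combination (2 * X 1 * Y 0 - 2 * X 0 * Y 1) * h1 +
            (p * Y 1 - p * X 1 + X 1 * Y 0 - X 0 * Y 1) * hx +
            (-(p * Y 1) + p * X 1 - X 1 * Y 0 + X 0 * Y 1) * hy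
        exact (mul_eq_zero.1 key).resolve_right hne
      have hmul : X 1 * ((Z 0 - X 0) * (Y 0 + p) + (Z 1 - X 1) * (Y 1)) = 0 := by
        linear_combination (Y 1) * hz + (-(Z 0 - X 0)) * hcross
      exact (mul_eq_zero.1 hmul).resolve_left hx1
  simp only [PiLp.inner_apply, Fin.sum_univ_two, PiLp.sub_apply,
    RCLike.inner_apply, conj_trivial, hP'0, hP'1]
  linarith [goal]
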